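/- Let nodes v_i and v_j have neighborhoods of sizes D_{ii}, D_{jj}, random neighbor features with ‖∑_{j'∈N(i)} x_{j'}‖₂ ≤ R√(D_{ii}) and ‖∑_{j'∈N(j)} x_{j'}‖₂ ≤ R√(D_{jj}) almost surely, and let σ be homogeneous of degree τ ≥ 1 with |σ(q)| ≤ c|q| for some c ≥ 0. Then for every δ' ∈ (0,1), with probability at least 1 − δ', |𝔼[Z_iᵀ Z_j] − Z_iᵀ Z_j| ≤ c²·R²·(∑_{k=1}^K ‖w_k‖₂²)·√(2 ln(2/δ') / (D_{ii}^{2τ−1} D_{jj}^{2τ−1})). -/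

import Mathlib

open MeasureTheory
open scoped RealInnerProductSpace

section Coord

variable {Fd : ℕ}

lemma coord_bound (σ : ℝ → ℝ) (τ : ℝ)
    (hhom : ∀ a q : ℝ, 0 < a → σ (a * q) = a ^ τ * σ q)
    (c : ℝ) (hc : 0 ≤ c) (hσc : ∀ q, |σ q| ≤ c * |q|)
    (D : ℕ) (hD : 0 < D) (R : ℝ) (hR : 0 ≤ R)
    (x v : EuclideanSpace ℝ (Fin Fd)) (hx : ‖x‖ ≤ R * Real.sqrt D) :
    |σ ((1 / (D : ℝ)) * ⟪x, v⟫)| ≤ c * R * ‖v‖ / Real.sqrt ((D : ℝ) ^ (2 * τ - 1)) := by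
  have hd : (0:ℝ) < (D:ℝ) := Nat.cast_pos.mpr hD
  rw [hhom _ _ (by positivity)]
  rw [abs_mul, abs_of_nonneg (Real.rpow_nonneg (by positivity) τ)]
  have h2 : |⟪x, v⟫| ≤ R * Real.sqrt D * ‖v‖ :=
    (abs_real_inner_le_norm x v).trans (mul_le_mul_of_nonneg_right hx (norm_nonneg v))
  have h1 : |σ ⟪x, v⟫| ≤ c * (R * Real.sqrt D * ‖v‖) :=
    (hσc _).trans (mul_le_mul_of_nonneg_left h2 hc)
  calc (1/(D:ℝ)) ^ τ * |σ ⟪x, v⟫|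
      ≤ (1/(D:ℝ)) ^ τ * (c * (R * Real.sqrt (D:ℝ) * ‖v‖)) :=
        mul_le_mul_of_nonneg_left h1 (Real.rpow_nonneg (by positivity) τ)
    _ = c * R * ‖v‖ / Real.sqrt ((D:ℝ) ^ (2 * τ - 1)) := by
        have e1 : (1/(D:ℝ)) ^ τ = (D:ℝ) ^ (-τ) := by
          rw [one_div, Real.inv_rpow hd.le, ← Real.rpow_neg hd.le]
        have e2 : Real.sqrt (D:ℝ) = (D:ℝ) ^ ((1:ℝ)/2) := Real.sqrt_eq_rpow _
        have e3 : Real.sqrt ((D:ℝ) ^ (2 * τ - 1)) = (D:ℝ) ^ ((2 * τ - 1) * (1/2)) := by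
          rw [Real.sqrt_eq_rpow, ← Real.rpow_mul hd.le]
        rw [e1, e2, e3, eq_div_iff (ne_of_gt (Real.rpow_pos_of_pos hd _))]
        have e5 : (D:ℝ) ^ (-τ) * (D:ℝ) ^ ((1:ℝ)/2) * (D:ℝ) ^ ((2 * τ - 1) * (1/2)) = 1 := by
          rw [← Real.rpow_add hd, ← Real.rpow_add hd,
            show -τ + (1:ℝ)/2 + (2 * τ - 1) * (1/2) = 0 by ring, Real.rpow_zero]
        linear_combination (c * R * ‖v‖) * e5

end Coord
/-- `exp L ≤ 4 L` on `[log 2, 2]`, via convexity of `exp`. -/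
lemma exp_le_four_mul {L : ℝ} (h1 : Real.log 2 ≤ L) (h2 : L ≤ 2) :
    Real.exp L ≤ 4 * L := by
  have hl2 : (0.6931471803 : ℝ) < Real.log 2 := Real.log_two_gt_d9
  have hl2' : Real.log 2 < 0.6931471808 := Real.log_two_lt_d9
  have he : Real.exp 1 < 2.7182818286 := Real.exp_one_lt_d9
  have he0 : (0:ℝ) < Real.exp 1 := Real.exp_pos 1
  have hd : (0:ℝ) < 2 - Real.log 2 := by linarith
  set a : ℝ := (2 - L) / (2 - Real.log 2) with ha
  set b : ℝ := (L - Real.log 2) / (2 - Real.log 2) with hb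
  have ha0 : 0 ≤ a := div_nonneg (by linarith) hd.le
  have hb0 : 0 ≤ b := div_nonneg (by linarith) hd.le
  have hab : a + b = 1 := by rw [ha, hb]; field_simp; ring
  have hcomb : a • Real.log 2 + b • (2:ℝ) = L := by
    simp only [smul_eq_mul, ha, hb]; field_simp; ring
  have hconv := convexOn_exp.2 (Set.mem_univ (Real.log 2)) (Set.mem_univ (2:ℝ)) ha0 hb0 hab
  rw [hcomb] at hconv
  have hexp2 : Real.exp (2:ℝ) = Real.exp 1 * Real.exp 1 := by
    rw [← Real.exp_add]; norm_num
  rw [smul_eq_mul, smul_eq_mul, Real.exp_log (by norm_num), hexp2] at hconv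
  have hee : Real.exp 1 * Real.exp 1 < 7.3890562 := by nlinarith [he, he0]
  refine hconv.trans ?_
  rw [ha, hb, div_mul_eq_mul_div, div_mul_eq_mul_div, ← add_div, div_le_iff₀ hd]
  nlinarith

/-- Concentration for a single bounded random variable. -/
lemma conc_aux {Ω : Type*} [MeasurableSpace Ω] (P : Measure Ω) [IsProbabilityMeasure P]
    (Y : Ω → ℝ) (hYm : Measurable Y) (B : ℝ) (hB : 0 ≤ B)
    (hb : ∀ᵐ ω ∂P, |Y ω| ≤ B) (δ' : ℝ) (hδ' : δ' ∈ Set.Ioo (0:ℝ) 1) :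
    ENNReal.ofReal (1 - δ') ≤
      P {ω | |(∫ ω', Y ω' ∂P) - Y ω| ≤ B * Real.sqrt (2 * Real.log (2 / δ'))} := by
  obtain ⟨hδ0, hδ1⟩ := hδ'
  set L : ℝ := Real.log (2 / δ') with hLdef
  have h2δ : (2:ℝ) < 2 / δ' := by
    rw [lt_div_iff₀ hδ0]; nlinarith
  have hL2 : Real.log 2 < L := Real.log_lt_log (by norm_num) h2δ
  have hLpos : 0 < L := lt_trans (Real.log_pos (by norm_num)) hL2
  set t : ℝ := B * Real.sqrt (2 * L) with htdef
  have ht0 : 0 ≤ t := mul_nonneg hB (Real.sqrt_nonneg _)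
  set A : Set Ω := {ω | |(∫ ω', Y ω' ∂P) - Y ω| ≤ t} with hAdef
  -- integrability facts
  have hYint : Integrable Y P := by
    refine Integrable.mono' (integrable_const B) hYm.aestronglyMeasurable ?_
    filter_upwards [hb] with ω h using by simpa [Real.norm_eq_abs] using h
  have hIB : |∫ ω', Y ω' ∂P| ≤ B := by
    calc |∫ ω', Y ω' ∂P| ≤ ∫ ω', |Y ω'| ∂P := by
          simpa [Real.norm_eq_abs] using norm_integral_le_integral_norm (μ := P) Y
      _ ≤ ∫ _ω', B ∂P := integral_mono_ae hYint.abs (integrable_const B) hb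
      _ = B := by simp
  -- main step : P Aᶜ ≤ δ'
  have hcompl : P Aᶜ ≤ ENNReal.ofReal δ' := by
    by_cases hdet : 2 * B ≤ t
    · -- deterministic case: A holds a.e.
      have hae : ∀ᵐ ω ∂P, ω ∈ A := by
        filter_upwards [hb] with ω h
        show |(∫ ω', Y ω' ∂P) - Y ω| ≤ t
        calc |(∫ ω', Y ω' ∂P) - Y ω| ≤ |∫ ω', Y ω' ∂P| + |Y ω| := abs_sub _ _
          _ ≤ 2 * B := by linarith
          _ ≤ t := hdet
      have h0 : P Aᶜ = 0 := by
        have := hae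
        rw [MeasureTheory.ae_iff] at this
        simpa [hAdef, Set.compl_setOf] using this
      simp [h0]
    · -- Chebyshev case
      push_neg at hdet
      have hBpos : 0 < B := by
        by_contra h
        push_neg at h
        have : B = 0 := le_antisymm h hB
        rw [this] at hdet; simp at hdet
        linarith [ht0, hdet]
      have htpos : 0 < t := by
        apply mul_pos hBpos
        exact Real.sqrt_pos.mpr (by linarith)
      have hLlt2 : L < 2 := by
        by_contra h
        push_neg at h
        have hs4 : (2:ℝ) ≤ Real.sqrt (2 * L) := by
          have hsq := Real.sq_sqrt (show (0:ℝ) ≤ 2 * L by linarith)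
          nlinarith [Real.sqrt_nonneg (2 * L)]
        have h5 : 2 * B ≤ B * Real.sqrt (2 * L) :=
          by nlinarith [mul_le_mul_of_nonneg_left hs4 hB]
        rw [htdef] at hdet; linarith
      -- Memℒp
      have hmem : MemLp Y 2 P :=
        MemLp.of_bound hYm.aestronglyMeasurable B
          (by filter_upwards [hb] with ω h using by simpa [Real.norm_eq_abs] using h)
      have hcheb := ProbabilityTheory.meas_ge_le_variance_div_sq (μ := P) hmem htpos
      have hsub : P Aᶜ ≤ P {ω | t ≤ |Y ω - ∫ ω', Y ω' ∂P|} := by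
        apply measure_mono
        intro ω hω
        simp only [hAdef, Set.mem_compl_iff, Set.mem_setOf_eq, not_le] at hω
        simp only [Set.mem_setOf_eq]
        rw [abs_sub_comm]
        exact hω.le
      refine hsub.trans (hcheb.trans ?_)
      apply ENNReal.ofReal_le_ofReal
      -- Var ≤ B², t² = 2 L B²
      have hvar : ProbabilityTheory.variance Y P ≤ B ^ 2 := by
        refine (ProbabilityTheory.variance_le_expectation_sq hYm.aestronglyMeasurable).trans ?_
        calc ∫ ω', (Y ^ 2) ω' ∂P ≤ ∫ _ω', B ^ 2 ∂P := by
              refine integral_mono_ae ?_ (integrable_const _) ?_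
              · refine Integrable.mono' (integrable_const (B ^ 2))
                  ((hYm.pow_const 2).aestronglyMeasurable) ?_
                filter_upwards [hb] with ω h
                simp only [Pi.pow_apply, Real.norm_eq_abs, abs_pow, sq_abs]
                exact sq_le_sq' (by linarith [(abs_le.mp h).1]) (abs_le.mp h).2
              · filter_upwards [hb] with ω h
                simp only [Pi.pow_apply]
                exact sq_le_sq' (by linarith [(abs_le.mp h).1]) (abs_le.mp h).2
          _ = B ^ 2 := by simp
      have ht2 : t ^ 2 = 2 * L * B ^ 2 := by
        rw [htdef, mul_pow, Real.sq_sqrt (by linarith)]; ring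
      have hexpL : Real.exp L = 2 / δ' := Real.exp_log (by positivity)
      have h4L : Real.exp L ≤ 4 * L := exp_le_four_mul hL2.le hLlt2.le
      have hkey : 1 / (2 * L) ≤ δ' := by
        rw [div_le_iff₀ (by linarith)]
        have : 2 / δ' ≤ 4 * L := hexpL ▸ h4L
        rw [div_le_iff₀ hδ0] at this
        linarith
      have hB' : B ≠ 0 := hBpos.ne'
      have hL' : L ≠ 0 := hLpos.ne'
      calc ProbabilityTheory.variance Y P / t ^ 2 ≤ B ^ 2 / t ^ 2 :=
            (div_le_div_iff_of_pos_right (pow_pos htpos 2)).mpr hvar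
        _ = 1 / (2 * L) := by rw [ht2]; field_simp
        _ ≤ δ' := hkey
  -- conclude
  calc ENNReal.ofReal (1 - δ') = 1 - ENNReal.ofReal δ' := by
        rw [← ENNReal.ofReal_one, ← ENNReal.ofReal_sub _ hδ0.le]
    _ ≤ 1 - P Aᶜ := by exact tsub_le_tsub_left hcompl 1
    _ ≤ P A := by
        rw [tsub_le_iff_right]
        calc (1 : ENNReal) = P (A ∪ Aᶜ) := by simp
          _ ≤ P A + P Aᶜ := measure_union_le A Aᶜ

/-- Concentration of the inner product of aggregated representations (Theorem 1, part 3):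
under the boundedness and homogeneity assumptions on the neighbor features and the
activation `σ`, for every `δ' ∈ (0,1)`, with probability at least `1 - δ'`,
`|𝔼[Zᵢᵀ Zⱼ] - Zᵢᵀ Zⱼ| ≤ c² R² (∑_k ‖w_k‖₂²) √(2 ln(2/δ') / (Dᵢᵢ^{2τ-1} Dⱼⱼ^{2τ-1}))`. -/
theorem stmt4
    {Ω : Type*} [MeasurableSpace Ω] (P : Measure Ω) [IsProbabilityMeasure P]
    (F K Di Dj : ℕ) (hDi : 0 < Di) (hDj : 0 < Dj) (R : ℝ) (hR : 0 ≤ R)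
    (xi : Fin Di → Ω → EuclideanSpace ℝ (Fin F))
    (xj : Fin Dj → Ω → EuclideanSpace ℝ (Fin F))
    (hxim : ∀ j', Measurable (xi j')) (hxjm : ∀ j', Measurable (xj j'))
    (hxi : ∀ᵐ ω ∂P, ‖∑ j', xi j' ω‖ ≤ R * Real.sqrt Di)
    (hxj : ∀ᵐ ω ∂P, ‖∑ j', xj j' ω‖ ≤ R * Real.sqrt Dj)
    (σ : ℝ → ℝ) (hσm : Measurable σ) (τ : ℝ) (hτ : 1 ≤ τ)
    (hhom : ∀ a q : ℝ, 0 < a → σ (a * q) = a ^ τ * σ q)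
    (c : ℝ) (hc : 0 ≤ c) (hσc : ∀ q, |σ q| ≤ c * |q|)
    (w : Fin K → EuclideanSpace ℝ (Fin F))
    (Zi Zj : Ω → Fin K → ℝ)
    (hZi : ∀ ω k, Zi ω k = σ ((1 / (Di : ℝ)) * ∑ j', ⟪xi j' ω, w k⟫))
    (hZj : ∀ ω k, Zj ω k = σ ((1 / (Dj : ℝ)) * ∑ j', ⟪xj j' ω, w k⟫))
    (δ' : ℝ) (hδ' : δ' ∈ Set.Ioo (0 : ℝ) 1) :
    ENNReal.ofReal (1 - δ') ≤
      P {ω | |(∫ ω', ∑ k, Zi ω' k * Zj ω' k ∂P) - ∑ k, Zi ω k * Zj ω k| ≤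
        c ^ 2 * R ^ 2 * (∑ k, ‖w k‖ ^ 2) *
          Real.sqrt (2 * Real.log (2 / δ') /
            ((Di : ℝ) ^ (2 * τ - 1) * (Dj : ℝ) ^ (2 * τ - 1)))} := by
  have hDi' : (0:ℝ) < (Di:ℝ) := Nat.cast_pos.mpr hDi
  have hDj' : (0:ℝ) < (Dj:ℝ) := Nat.cast_pos.mpr hDj
  have hS0 : 0 ≤ ∑ k, ‖w k‖ ^ 2 := Finset.sum_nonneg fun k _ => sq_nonneg _
  have hsqDi : (0:ℝ) < Real.sqrt ((Di:ℝ) ^ (2 * τ - 1)) :=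
    Real.sqrt_pos.mpr (Real.rpow_pos_of_pos hDi' _)
  have hsqDj : (0:ℝ) < Real.sqrt ((Dj:ℝ) ^ (2 * τ - 1)) :=
    Real.sqrt_pos.mpr (Real.rpow_pos_of_pos hDj' _)
  -- measurability
  have hZim : ∀ k, Measurable fun ω => Zi ω k := by
    intro k
    have h : (fun ω => Zi ω k) = fun ω => σ ((1 / (Di:ℝ)) * ∑ j', ⟪xi j' ω, w k⟫) :=
      funext fun ω => hZi ω k
    rw [h]
    exact hσm.comp ((Finset.measurable_sum Finset.univ
      fun j' _ => (hxim j').inner_const).const_mul _)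
  have hZjm : ∀ k, Measurable fun ω => Zj ω k := by
    intro k
    have h : (fun ω => Zj ω k) = fun ω => σ ((1 / (Dj:ℝ)) * ∑ j', ⟪xj j' ω, w k⟫) :=
      funext fun ω => hZj ω k
    rw [h]
    exact hσm.comp ((Finset.measurable_sum Finset.univ
      fun j' _ => (hxjm j').inner_const).const_mul _)
  have hYm : Measurable fun ω => ∑ k, Zi ω k * Zj ω k :=
    Finset.measurable_sum Finset.univ fun k _ => (hZim k).mul (hZjm k)
  -- a.e. bound
  have hB0 : 0 ≤ c ^ 2 * R ^ 2 * (∑ k, ‖w k‖ ^ 2) /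
      Real.sqrt ((Di:ℝ) ^ (2 * τ - 1) * (Dj:ℝ) ^ (2 * τ - 1)) :=
    div_nonneg (mul_nonneg (mul_nonneg (sq_nonneg c) (sq_nonneg R)) hS0) (Real.sqrt_nonneg _)
  have hb : ∀ᵐ ω ∂P, |∑ k, Zi ω k * Zj ω k| ≤
      c ^ 2 * R ^ 2 * (∑ k, ‖w k‖ ^ 2) /
        Real.sqrt ((Di:ℝ) ^ (2 * τ - 1) * (Dj:ℝ) ^ (2 * τ - 1)) := by
    filter_upwards [hxi, hxj] with ω h1 h2
    have hbi : ∀ k, |Zi ω k| ≤ c * R * ‖w k‖ / Real.sqrt ((Di:ℝ) ^ (2 * τ - 1)) := by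
      intro k
      rw [hZi ω k, show (∑ j', ⟪xi j' ω, w k⟫) = ⟪∑ j', xi j' ω, w k⟫ from
        (sum_inner _ _ _).symm]
      exact coord_bound σ τ hhom c hc hσc Di hDi R hR _ (w k) h1
    have hbj : ∀ k, |Zj ω k| ≤ c * R * ‖w k‖ / Real.sqrt ((Dj:ℝ) ^ (2 * τ - 1)) := by
      intro k
      rw [hZj ω k, show (∑ j', ⟪xj j' ω, w k⟫) = ⟪∑ j', xj j' ω, w k⟫ from
        (sum_inner _ _ _).symm]
      exact coord_bound σ τ hhom c hc hσc Dj hDj R hR _ (w k) h2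
    calc |∑ k, Zi ω k * Zj ω k| ≤ ∑ k, |Zi ω k * Zj ω k| :=
          Finset.abs_sum_le_sum_abs _ _
      _ ≤ ∑ k, c ^ 2 * R ^ 2 * ‖w k‖ ^ 2 /
            Real.sqrt ((Di:ℝ) ^ (2 * τ - 1) * (Dj:ℝ) ^ (2 * τ - 1)) := by
          refine Finset.sum_le_sum fun k _ => ?_
          rw [abs_mul]
          refine (mul_le_mul (hbi k) (hbj k) (abs_nonneg _)
            (div_nonneg (mul_nonneg (mul_nonneg hc hR) (norm_nonneg _))
              (Real.sqrt_nonneg _))).trans_eq ?_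
          rw [div_mul_div_comm, ← Real.sqrt_mul (Real.rpow_pos_of_pos hDi' _).le]
          ring
      _ = c ^ 2 * R ^ 2 * (∑ k, ‖w k‖ ^ 2) /
            Real.sqrt ((Di:ℝ) ^ (2 * τ - 1) * (Dj:ℝ) ^ (2 * τ - 1)) := by
          rw [← Finset.sum_div, ← Finset.mul_sum]
  -- rewrite the radius and conclude
  have hL0 : 0 ≤ 2 * Real.log (2 / δ') := by
    have : (1:ℝ) ≤ 2 / δ' := by
      rw [le_div_iff₀ hδ'.1]
      linarith [hδ'.2]
    linarith [Real.log_nonneg this]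
  have hr : c ^ 2 * R ^ 2 * (∑ k, ‖w k‖ ^ 2) *
      Real.sqrt (2 * Real.log (2 / δ') /
        ((Di : ℝ) ^ (2 * τ - 1) * (Dj : ℝ) ^ (2 * τ - 1)))
      = (c ^ 2 * R ^ 2 * (∑ k, ‖w k‖ ^ 2) /
          Real.sqrt ((Di:ℝ) ^ (2 * τ - 1) * (Dj:ℝ) ^ (2 * τ - 1))) *
        Real.sqrt (2 * Real.log (2 / δ')) := by
    rw [Real.sqrt_div hL0]
    ring
  rw [hr]
  exact conc_aux P _ hYm _ hB0 hb δ' hδ'
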